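/- The number of Dyck paths of semilength k+n that begin with at least k upsteps equals the generalized Catalan number C_n^(k) = ((k+1)/(2n+k+1)) * binomial(2n+k+1, n). -/

import Mathlib

def gc (n k : ℕ) : ℚ := ((k : ℚ) + 1) / (2 * (n : ℚ) + (k : ℚ) + 1) * ((2 * n + k + 1).choose n : ℚ)

def cat (n : ℕ) : ℚ := 1 / ((n : ℚ) + 1) * ((2 * n).choose n : ℚ)

def Cond {n : ℕ} (u : Fin n → ℕ) : Prop :=
  ∀ i j : Fin n, i < j →
    ¬(1 ≤ (u j : ℤ) - (((j : ℕ) : ℤ) - ((i : ℕ) : ℤ)) ∧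
      (u j : ℤ) - (((j : ℕ) : ℤ) - ((i : ℕ) : ℤ)) ≤ (u i : ℤ) - 1)

/-! ### Arithmetic lemmas about `gc` -/

lemma gc_zero (k : ℕ) : gc 0 k = 1 := by
  unfold gc
  simp
  positivity

lemma gc_n_zero (n : ℕ) : gc (n+1) 0 = gc n 1 := by
  unfold gc
  have h := Nat.add_one_mul_choose_eq (2*n+2) n
  have h2 : 2*n+2+1 = 2*(n+1)+0+1 := by omega
  have h3 : 2*n+2 = 2*n+1+1 := by omega
  rw [h2, h3] at h
  have hq : ((2*(n+1)+0+1).choose (n+1) : ℚ) * (n+1) = ((2*n+1+1).choose n : ℚ) * (2*n+3) := by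
    exact_mod_cast by rw [← h]; ring
  have d1 : (2 * ((n:ℚ)+1) + 0 + 1) ≠ 0 := by positivity
  have d2 : (2 * (n:ℚ) + 1 + 1) ≠ 0 := by positivity
  field_simp
  push_cast at hq ⊢
  nlinarith [hq]

lemma gc_rec (n k : ℕ) : gc (n+1) (k+1) = gc n (k+2) + gc (n+1) k := by
  unfold gc
  have e1 : 2*(n+1)+(k+1)+1 = (2*n+k+3)+1 := by omega
  have e2 : 2*n+(k+2)+1 = 2*n+k+3 := by omega
  have e3 : 2*(n+1)+k+1 = 2*n+k+3 := by omega
  rw [e1, e2, e3]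
  set M := 2*n+k+3 with hM
  have pas : (M+1).choose (n+1) = M.choose n + M.choose (n+1) := Nat.choose_succ_succ M n
  have rel : M.choose (n+1) * (n+1) = M.choose n * (n+k+3) := by
    have hmn : M - n = n+k+3 := by omega
    rw [Nat.choose_succ_right_eq, hmn]
  have pasq : ((M+1).choose (n+1) : ℚ) = (M.choose n : ℚ) + (M.choose (n+1) : ℚ) := by
    exact_mod_cast pas
  have relq : (M.choose (n+1) : ℚ) * ((n:ℚ)+1) = (M.choose n : ℚ) * ((n:ℚ)+(k:ℚ)+3) := by
    exact_mod_cast rel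
  rw [pasq]
  set A := (M.choose n : ℚ)
  set B := (M.choose (n+1) : ℚ)
  have hMq : (M : ℚ) = 2*(n:ℚ)+(k:ℚ)+3 := by push_cast [hM]; ring
  have d1 : 2 * ((n:ℚ)+1) + ((k:ℚ)+1) + 1 ≠ 0 := by positivity
  have d2 : 2 * (n:ℚ) + ((k:ℚ)+2) + 1 ≠ 0 := by positivity
  have d3 : 2 * ((n:ℚ)+1) + (k:ℚ) + 1 ≠ 0 := by positivity
  push_cast [hMq]
  field_simp
  nlinarith [relq]

/-! ### The auxiliary family of sets: nonnegative-shifted paths from height `k` to `0` -/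

def T (n k : ℕ) : Set (List ℤ) :=
  {l | l.length = 2*n+k ∧ (∀ x ∈ l, x = 1 ∨ x = -1) ∧
    (∀ p : List ℤ, p <+: l → -(k:ℤ) ≤ p.sum) ∧ l.sum = -(k:ℤ)}

lemma neg_len_le_sum (l : List ℤ) (h : ∀ x ∈ l, x = 1 ∨ x = -1) :
    -(l.length : ℤ) ≤ l.sum := by
  induction l with
  | nil => simp
  | cons x t ih =>
    have hx := h x (by simp)
    have ht := ih (fun y hy => h y (by simp [hy]))
    simp only [List.sum_cons, List.length_cons]
    push_cast
    rcases hx with h1 | h1 <;> omega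

lemma all_neg_one (l : List ℤ) (h : ∀ x ∈ l, x = 1 ∨ x = -1)
    (hs : l.sum = -(l.length : ℤ)) : l = List.replicate l.length (-1) := by
  induction l with
  | nil => simp
  | cons x t ih =>
    have hx := h x (by simp)
    have ht := neg_len_le_sum t (fun y hy => h y (by simp [hy]))
    simp only [List.sum_cons, List.length_cons] at hs
    push_cast at hs
    have hx' : x = -1 := by rcases hx with h1 | h1 <;> omega
    have hts : t.sum = -(t.length : ℤ) := by omega
    rw [hx', ih (fun y hy => h y (by simp [hy])) hts]
    simp [List.replicate_succ]

lemma T_zero (k : ℕ) : T 0 k = {List.replicate k (-1)} := by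
  ext l
  simp only [T, Set.mem_setOf_eq, Set.mem_singleton_iff]
  constructor
  · rintro ⟨hlen, hmem, -, hsum⟩
    have := all_neg_one l hmem (by rw [hsum, hlen]; push_cast; ring)
    rw [this, hlen]; simp
  · rintro rfl
    refine ⟨by simp, by simp +contextual, ?_, by simp⟩
    intro p hp
    rw [List.prefix_iff_eq_take] at hp
    rw [hp, List.take_replicate]
    simp only [List.sum_replicate, nsmul_eq_mul, mul_neg_one]
    have : min p.length k ≤ k := min_le_right _ _
    omega

lemma T_cons_one (n k : ℕ) :
    (fun t => (1:ℤ) :: t) '' T n (k+1) ⊆ T (n+1) k := by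
  rintro - ⟨t, ⟨hlen, hmem, hpre, hsum⟩, rfl⟩
  refine ⟨by simp [hlen]; omega, ?_, ?_, by simp only [List.sum_cons, hsum]; push_cast; ring⟩
  · intro x hx; rcases List.mem_cons.1 hx with rfl | hx; exact Or.inl rfl; exact hmem x hx
  · intro p hp
    match p, hp with
    | [], _ => simp
    | y :: q, hp =>
      obtain ⟨rfl, hq⟩ := List.cons_prefix_cons.1 hp
      have := hpre q hq
      simp only [List.sum_cons]
      push_cast at this ⊢
      omega

lemma T_cons_neg (n k : ℕ) :
    (fun t => (-1:ℤ) :: t) '' T n k ⊆ T n (k+1) := by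
  rintro - ⟨t, ⟨hlen, hmem, hpre, hsum⟩, rfl⟩
  refine ⟨by simp [hlen]; omega, ?_, ?_, by simp only [List.sum_cons, hsum]; push_cast; ring⟩
  · intro x hx; rcases List.mem_cons.1 hx with rfl | hx; exact Or.inr rfl; exact hmem x hx
  · intro p hp
    match p, hp with
    | [], _ => simp only [List.sum_nil]; push_cast; omega
    | y :: q, hp =>
      obtain ⟨rfl, hq⟩ := List.cons_prefix_cons.1 hp
      have := hpre q hq
      simp only [List.sum_cons]
      push_cast at this ⊢
      omega

lemma T_split (n k : ℕ) (l : List ℤ) (hl : l ∈ T (n+1) k) :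
    (∃ t ∈ T n (k+1), l = 1 :: t) ∨ (∃ k', k = k'+1 ∧ ∃ t ∈ T (n+1) k', l = -1 :: t) := by
  obtain ⟨hlen, hmem, hpre, hsum⟩ := hl
  match l with
  | [] => simp at hlen; omega
  | x :: t =>
    have hx := hmem x (by simp)
    simp only [List.length_cons, List.sum_cons] at hlen hsum
    have hmem' : ∀ y ∈ t, y = 1 ∨ y = -1 := fun y hy => hmem y (by simp [hy])
    rcases hx with rfl | rfl
    · left
      refine ⟨t, ⟨by omega, hmem', ?_, by push_cast; omega⟩, rfl⟩
      intro q hq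
      have := hpre (1 :: q) (by simp [List.cons_prefix_cons, hq])
      simp only [List.sum_cons] at this
      push_cast at this ⊢
      omega
    · right
      have hk : k ≠ 0 := by
        intro h; subst h
        have := hpre [-1] (by simp [List.prefix_iff_eq_take])
        simp at this
      obtain ⟨k', rfl⟩ := Nat.exists_eq_succ_of_ne_zero hk
      refine ⟨k', rfl, t, ⟨by omega, hmem', ?_, by push_cast at hsum ⊢; omega⟩, rfl⟩
      intro q hq
      have := hpre (-1 :: q) (by simp [List.cons_prefix_cons, hq])
      simp only [List.sum_cons] at this
      push_cast at this ⊢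
      omega

lemma T_eq_zero (n : ℕ) : T (n+1) 0 = (fun t => (1:ℤ) :: t) '' T n 1 := by
  apply Set.Subset.antisymm _ (T_cons_one n 0)
  intro l hl
  rcases T_split n 0 l hl with ⟨t, ht, rfl⟩ | ⟨k', hk', -⟩
  · exact ⟨t, ht, rfl⟩
  · omega

lemma T_eq_succ (n k : ℕ) :
    T (n+1) (k+1) = (fun t => (1:ℤ) :: t) '' T n (k+2) ∪ (fun t => (-1:ℤ) :: t) '' T (n+1) k := by
  apply Set.Subset.antisymm
  · intro l hl
    rcases T_split n (k+1) l hl with ⟨t, ht, rfl⟩ | ⟨k', hk', t, ht, rfl⟩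
    · exact Or.inl ⟨t, ht, rfl⟩
    · obtain rfl : k' = k := by omega
      exact Or.inr ⟨t, ht, rfl⟩
  · exact Set.union_subset (T_cons_one n (k+1)) (T_cons_neg (n+1) k)

lemma cons_inj (x : ℤ) : Function.Injective (fun t : List ℤ => x :: t) := by
  intro a b h; simpa using h

lemma T_card : ∀ n k : ℕ, (T n k).Finite ∧ ((T n k).ncard : ℚ) = gc n k := by
  intro n
  induction n with
  | zero =>
    intro k
    rw [T_zero k, gc_zero]
    exact ⟨Set.finite_singleton _, by simp⟩
  | succ n ih =>
    intro k
    induction k with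
    | zero =>
      rw [T_eq_zero n, gc_n_zero]
      exact ⟨(ih 1).1.image _, by rw [Set.ncard_image_of_injective _ (cons_inj 1), (ih 1).2]⟩
    | succ k ihk =>
      rw [T_eq_succ n k, gc_rec]
      have hdisj : Disjoint ((fun t => (1:ℤ) :: t) '' T n (k+2))
          ((fun t => (-1:ℤ) :: t) '' T (n+1) k) := by
        rw [Set.disjoint_left]
        rintro - ⟨t, -, rfl⟩ ⟨s, -, h⟩
        simp at h
      have h1 : ((fun t => (1:ℤ) :: t) '' T n (k+2)).Finite := (ih (k+2)).1.image _
      have h2 : ((fun t => (-1:ℤ) :: t) '' T (n+1) k).Finite := ihk.1.image _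
      refine ⟨h1.union h2, ?_⟩
      rw [Set.ncard_union_eq hdisj h1 h2]
      push_cast
      rw [Set.ncard_image_of_injective _ (cons_inj 1),
        Set.ncard_image_of_injective _ (cons_inj (-1)), (ih (k+2)).2, ihk.2]

/-! ### Bijection between the statement set and `T n k` -/

lemma rep_sum (k : ℕ) : (List.replicate k (1:ℤ)).sum = (k:ℤ) := by
  simp [List.sum_replicate]

lemma S_eq (n k : ℕ) :
    {l : List ℤ | l.length = 2 * (k + n) ∧ (∀ x ∈ l, x = 1 ∨ x = -1) ∧
      (∀ p : List ℤ, p <+: l → 0 ≤ p.sum) ∧ l.sum = 0 ∧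
      l.take k = List.replicate k 1} = (fun m => List.replicate k 1 ++ m) '' T n k := by
  ext l
  simp only [Set.mem_setOf_eq, Set.mem_image]
  constructor
  · rintro ⟨hlen, hmem, hpre, hsum, htake⟩
    refine ⟨l.drop k, ⟨?_, ?_, ?_, ?_⟩, ?_⟩
    · simp [hlen]; omega
    · intro x hx; exact hmem x (List.mem_of_mem_drop hx)
    · intro q hq
      obtain ⟨r, hr⟩ := hq
      have hdec : List.replicate k 1 ++ (q ++ r) = l := by
        rw [hr, ← htake, List.take_append_drop]
      have hp : (List.replicate k 1 ++ q) <+: l := ⟨r, by rw [← hdec]; simp⟩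
      have := hpre _ hp
      rw [List.sum_append, rep_sum] at this
      omega
    · have hdec : List.replicate k 1 ++ l.drop k = l := by
        rw [← htake, List.take_append_drop]
      have : (List.replicate k 1).sum + (l.drop k).sum = l.sum := by
        rw [← List.sum_append, hdec]
      rw [rep_sum, hsum] at this
      omega
    · rw [← htake, List.take_append_drop]
  · rintro ⟨m, ⟨hlen, hmem, hpre, hsum⟩, rfl⟩
    refine ⟨?_, ?_, ?_, ?_, ?_⟩
    · simp [hlen]; omega
    · intro x hx
      rcases List.mem_append.1 hx with hx | hx
      · exact Or.inl (List.eq_of_mem_replicate hx)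
      · exact hmem x hx
    · intro p hp
      rw [List.prefix_iff_eq_take] at hp
      rw [hp, List.take_append, List.take_replicate, List.length_replicate,
        List.sum_append, List.sum_replicate, nsmul_eq_mul, mul_one]
      rcases le_or_gt p.length k with h | h
      · have : p.length - k = 0 := by omega
        rw [this]
        simp
      · have hq : m.take (p.length - k) <+: m := List.take_prefix _ _
        have := hpre _ hq
        have hmin : min p.length k = k := by omega
        rw [hmin]
        omega
    · rw [List.sum_append, rep_sum, hsum]; ring
    · rw [List.take_append, List.take_replicate, List.length_replicate]
      simp

theorem stmt3 (n k : ℕ) :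
    ({l : List ℤ | l.length = 2 * (k + n) ∧ (∀ x ∈ l, x = 1 ∨ x = -1) ∧
      (∀ p : List ℤ, p <+: l → 0 ≤ p.sum) ∧ l.sum = 0 ∧
      l.take k = List.replicate k 1}.ncard : ℚ) = gc n k := by
  rw [S_eq n k, Set.ncard_image_of_injective _ (fun a b h => List.append_cancel_left h)]
  exact (T_card n k).2
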